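/- Let P, Q be ω-posets with P regular, and φ : SP → SQ a continuous map between spectra. Then the relations ⊒_φ = {(q,p) : q̄_S ⊇ φ[p̄_S]} and ⊐_φ = {(q,p) : q_S ⊇ φ[p̄_S]} are refiners; if Q is also regular, then φ(S) = S^{⊑_φ ⊲} for every S ∈ SP (and likewise for ⊐_φ). -/

import Mathlib

namespace OP

section OmegaPoset

variable (P : Type*) [PartialOrder P]

/-- The n-th cone of the poset: `cone 0` is the set of maximal elements. -/
def cone : ℕ → Set P
  | 0 => {p | ∀ q, ¬ p < q}
  | n + 1 => {p | ∀ q, p < q → q ∈ cone n}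

/-- The n-th level: atoms (minimal elements) of the n-th cone. -/
def level (n : ℕ) : Set P := {p | p ∈ cone P n ∧ ∀ q, q < p → q ∉ cone P n}

/-- An ω-poset: all levels finite and every element in some cone. -/
def IsOmegaPoset : Prop := (∀ n, (level P n).Finite) ∧ ∀ p : P, ∃ n, p ∈ cone P n

variable {P}

/-- `refines A C` : every element of `A` lies below some element of `C` (`A ≤ C`). -/
def refines (A C : Set P) : Prop := ∀ a ∈ A, ∃ c ∈ C, a ≤ c

/-- A cap is a subset refined by some level. -/
def IsCap (C : Set P) : Prop := ∃ n, refines (level P n) C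

/-- A selector meets every cap. -/
def IsSelector (S : Set P) : Prop := ∀ C : Set P, IsCap C → (S ∩ C).Nonempty

/-- `wedge p q` : `p` and `q` have a common lower bound. -/
def wedge (p q : P) : Prop := ∃ r, r ≤ p ∧ r ≤ q

def wedgeSet (p : P) : Set P := {q | wedge p q}

/-- The adjacency relation `p ⌅ q`. -/
def barwedge (p q : P) : Prop := ∀ C : Set P, IsCap C → ∃ c ∈ C, wedge p c ∧ wedge c q

/-- `p ⊲_C q`. -/
def starBelowOn (C : Set P) (p q : P) : Prop := ∀ c ∈ C, wedge p c → c ≤ q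

/-- The star-below relation `p ⊲ q`. -/
def starBelow (p q : P) : Prop := ∃ n, starBelowOn (level P n) p q

/-- A clique: pairwise adjacent set. -/
def IsClique (X : Set P) : Prop := ∀ p ∈ X, ∀ q ∈ X, barwedge p q

/-- Unbounded subset: meets `C^≥` for every cap `C`. -/
def IsUnbounded (X : Set P) : Prop := ∀ C : Set P, IsCap C → ∃ u ∈ X, ∃ c ∈ C, u ≤ c

variable (P)

/-- Regularity: every level is eventually star-refined by a later level. -/
def IsRegular : Prop :=
  ∀ m, ∃ n, m < n ∧ ∀ p ∈ level P n, ∃ q ∈ level P m, starBelow p q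

/-- The spectrum: minimal selectors. -/
def Spec : Set (Set P) := {S | IsSelector S ∧ ∀ T ⊆ S, IsSelector T → T = S}

def SpecT : Type _ := {S : Set P // S ∈ Spec P}

instance : TopologicalSpace (SpecT P) :=
  TopologicalSpace.generateFrom {U | ∃ p : P, U = {S : SpecT P | p ∈ S.1}}

/-- The clique-spectrum: unbounded maximal cliques. -/
def CliqueSpec : Set (Set P) :=
  {X | IsUnbounded X ∧ IsClique X ∧ ∀ Y : Set P, IsClique Y → X ⊆ Y → Y = X}

def CliqueSpecT : Type _ := {X : Set P // X ∈ CliqueSpec P}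

instance : TopologicalSpace (CliqueSpecT P) :=
  TopologicalSpace.generateFrom {U | ∃ p : P, U = {X : CliqueSpecT P | p ∉ X.1}}

variable {P}

/-- The basic open set `p_S`. -/
def pSOpen (p : P) : Set (SpecT P) := {S | p ∈ S.1}

/-- The closed set `p̄_S = {S : S ⊆ p^∧}`. -/
def pSBar (p : P) : Set (SpecT P) := {S | S.1 ⊆ wedgeSet p}

/-- Prime ω-poset: every basic open set is nonempty. -/
def IsPrimePoset (P : Type*) [PartialOrder P] : Prop := ∀ p : P, (pSOpen p).Nonempty

end OmegaPoset

end OP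

namespace OP

section Refiners

variable {P Q : Type*} [PartialOrder P] [PartialOrder Q]

/-- A refiner: every cap of `Q` is refined through the relation by some cap of `P`. -/
def IsRefinerRel (R : Q → P → Prop) : Prop :=
  ∀ C : Set Q, IsCap C → ∃ B : Set P, IsCap B ∧ ∀ b ∈ B, ∃ c ∈ C, R c b

/-- `∧`-preserving: `⊐ ∘ ∧ ∘ ⊏ ⊆ ∧`. -/
def WedgePres (R : Q → P → Prop) : Prop :=
  ∀ q p p' q', R q p → wedge p p' → R q' p' → wedge q q'

/-- `⌅`-preserving: `⊐ ∘ ⌅ ∘ ⊏ ⊆ ⌅`. -/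
def BarwedgePres (R : Q → P → Prop) : Prop :=
  ∀ q p p' q', R q p → barwedge p p' → R q' p' → barwedge q q'

/-- The star `⊐*` of a relation: `q ⊐* p` iff some cap `C` has `C ∩ p^∧ ⊏ q`. -/
def relStar (R : Q → P → Prop) (q : Q) (p : P) : Prop :=
  ∃ C : Set P, IsCap C ∧ ∀ c ∈ C, wedge p c → R q c

/-- Composition `▷ ∘ ⊐` with the star-above relation on `Q`. -/
def starAboveComp (R : Q → P → Prop) : Q → P → Prop :=
  fun q p => ∃ q', starBelow q' q ∧ R q' p

/-- A strong refiner: a `∧`-preserving refiner with `⊐ = ▷ * ⊐`. -/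
def IsStrongRefiner (R : Q → P → Prop) : Prop :=
  IsRefinerRel R ∧ WedgePres R ∧ ∀ q p, R q p ↔ relStar (starAboveComp R) q p

/-- `φ` is the continuous map associated to `R`, i.e. `φ(S) = S^{⊏ ⊲}`. -/
def specMapOf (R : Q → P → Prop) (φ : SpecT P → SpecT Q) : Prop :=
  ∀ S : SpecT P, (φ S).1 = {r : Q | ∃ p ∈ S.1, ∃ q, R q p ∧ starBelow q r}

/-- The relation `⊒_φ`: `q ⊒_φ p` iff `q̄_S ⊇ φ[p̄_S]`. -/
def relBarPhi (φ : SpecT P → SpecT Q) (q : Q) (p : P) : Prop :=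
  ∀ S : SpecT P, S ∈ pSBar p → φ S ∈ pSBar q

/-- The relation `⊐_φ`: `q ⊐_φ p` iff `q_S ⊇ φ[p̄_S]`. -/
def relPhi (φ : SpecT P → SpecT Q) (q : Q) (p : P) : Prop :=
  ∀ S : SpecT P, S ∈ pSBar p → φ S ∈ pSOpen q

/-- An arrow: a finite relation with `← ∘ ⌅` co-surjective. -/
def IsArrow (A : Q → P → Prop) : Prop :=
  {x : Q × P | A x.1 x.2}.Finite ∧ ∀ p : P, ∃ q p', A q p' ∧ barwedge p' p

/-- `A ≤ B` for relations: `A ⊆ ≤ ∘ B ∘ ≥`. -/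
def arrowLe (A B : Q → P → Prop) : Prop :=
  ∀ q p, A q p → ∃ q' p', q ≤ q' ∧ p ≤ p' ∧ B q' p'

/-- The relation `⟨←` of an arrow: `q ⟨← p` iff `p^{⌅→} ⊲ q`. -/
def angleRel (A : Q → P → Prop) (q : Q) (p : P) : Prop :=
  ∀ q', (∃ p', barwedge p p' ∧ A q' p') → starBelow q' q

/-- The relation `⋂ₙ (←ₙ)̄_S` on spectra determined by a sequence of arrows. -/
def seqGraph (A : ℕ → Q → P → Prop) (T : SpecT Q) (S : SpecT P) : Prop :=
  ∀ n, ∃ q p, A n q p ∧ T.1 ⊆ wedgeSet q ∧ S.1 ⊆ wedgeSet p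

end Refiners

end OP



namespace OP

section Lemmas

variable {P : Type*} [PartialOrder P]

lemma cone_upclosed : ∀ n, ∀ {p q : P}, p ∈ cone P n → p ≤ q → q ∈ cone P n := by
  intro n
  induction n with
  | zero =>
    intro p q hp hpq r hr
    rcases eq_or_lt_of_le hpq with rfl | h
    · exact hp r hr
    · exact hp r (h.trans hr)
  | succ n ih =>
    intro p q hp hpq r hr
    rcases eq_or_lt_of_le hpq with rfl | h
    · exact hp r hr
    · exact hp r (h.trans hr)

lemma cone_succ_mono {n : ℕ} : cone P n ⊆ cone P (n + 1) := by
  intro p hp q hq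
  exact cone_upclosed n hp hq.le

lemma cone_mono {m n : ℕ} (h : m ≤ n) : cone P m ⊆ cone P n := by
  induction h with
  | refl => exact fun _ h => h
  | step _ ih => exact fun p hp => cone_succ_mono (ih hp)

/-- Every element of `level (n+1)` lies below some element of `level n`. -/
lemma level_succ_le {n : ℕ} {a : P} (ha : a ∈ level P (n + 1)) :
    ∃ c ∈ level P n, a ≤ c := by
  by_cases h : a ∈ cone P n
  · refine ⟨a, ⟨h, fun q hq hq' => ha.2 q hq (cone_succ_mono hq')⟩, le_refl a⟩
  · cases n with
    | zero =>
      obtain ⟨q, hq⟩ : ∃ q, a < q := by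
        by_contra hc
        push_neg at hc
        exact h hc
      have hq0 : q ∈ cone P 0 := ha.1 q hq
      exact ⟨q, ⟨hq0, fun s hs hs0 => hs0 q hs⟩, hq.le⟩
    | succ m =>
      obtain ⟨q, hq, hqm⟩ : ∃ q, a < q ∧ q ∉ cone P m := by
        by_contra hc
        push_neg at hc
        exact h hc
      have hq1 : q ∈ cone P (m + 1) := ha.1 q hq
      exact ⟨q, ⟨hq1, fun s hs hs1 => hqm (hs1 q hs)⟩, hq.le⟩

/-- Deeper levels refine shallower ones. -/
lemma level_le {m n : ℕ} (h : m ≤ n) : ∀ a ∈ level P n, ∃ c ∈ level P m, a ≤ c := by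
  induction h with
  | refl => exact fun a ha => ⟨a, ha, le_refl a⟩
  | @step k _ ih =>
    intro a ha
    obtain ⟨b, hb, hab⟩ := level_succ_le ha
    obtain ⟨c, hc, hbc⟩ := ih b hb
    exact ⟨c, hc, hab.trans hbc⟩

lemma level_isCap (n : ℕ) : IsCap (level P n) :=
  ⟨n, fun a ha => ⟨a, ha, le_refl a⟩⟩

lemma univ_isCap : IsCap (Set.univ : Set P) :=
  ⟨0, fun a _ => ⟨a, trivial, le_refl a⟩⟩

lemma cap_of_superset {C D : Set P} (h : IsCap C) (hCD : C ⊆ D) : IsCap D := by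
  obtain ⟨n, hn⟩ := h
  exact ⟨n, fun a ha => by obtain ⟨c, hc, hac⟩ := hn a ha; exact ⟨c, hCD hc, hac⟩⟩

lemma spec_selector {S : Set P} (hS : S ∈ Spec P) : IsSelector S := hS.1

lemma spec_meets {S C : Set P} (hS : S ∈ Spec P) (hC : IsCap C) : (S ∩ C).Nonempty :=
  hS.1 C hC

/-- Minimal selectors are up-closed. -/
lemma spec_upclosed {S : Set P} (hS : S ∈ Spec P) {p q : P} (hp : p ∈ S) (hpq : p ≤ q) :
    q ∈ S := by
  have hns : ¬ IsSelector (S \ {p}) := by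
    intro hsel
    have heq := hS.2 _ Set.diff_subset hsel
    have : p ∈ S \ {p} := by rw [heq]; exact hp
    exact this.2 rfl
  simp only [IsSelector, not_forall] at hns
  obtain ⟨C, hC, hmt⟩ := hns
  have hmt' : (S \ {p}) ∩ C = ∅ := Set.not_nonempty_iff_eq_empty.mp hmt
  -- the modified cap
  set C' : Set P := insert q (C \ {p}) with hC'
  have hcap : IsCap C' := by
    obtain ⟨n, hn⟩ := hC
    refine ⟨n, fun a ha => ?_⟩
    obtain ⟨c, hc, hac⟩ := hn a ha
    by_cases hcp : c = p
    · exact ⟨q, Set.mem_insert _ _, hac.trans (hcp ▸ hpq)⟩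
    · exact ⟨c, Set.mem_insert_of_mem _ ⟨hc, hcp⟩, hac⟩
  obtain ⟨x, hxS, hxC⟩ := hS.1 C' hcap
  rcases hxC with rfl | ⟨hxC, hxp⟩
  · exact hxS
  · have : x ∈ (S \ {p}) ∩ C := ⟨⟨hxS, hxp⟩, hxC⟩
    rw [hmt'] at this
    exact absurd this (Set.notMem_empty x)

/-- Every point of a minimal selector is isolated by some cap. -/
lemma spec_essential {S : Set P} (hS : S ∈ Spec P) {p : P} (hp : p ∈ S) :
    ∃ C, IsCap C ∧ S ∩ C = {p} := by
  have hns : ¬ IsSelector (S \ {p}) := by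
    intro hsel
    have heq := hS.2 _ Set.diff_subset hsel
    have : p ∈ S \ {p} := by rw [heq]; exact hp
    exact this.2 rfl
  simp only [IsSelector, not_forall] at hns
  obtain ⟨C, hC, hmt⟩ := hns
  have hmt' : (S \ {p}) ∩ C = ∅ := Set.not_nonempty_iff_eq_empty.mp hmt
  refine ⟨insert p C, cap_of_superset hC (Set.subset_insert _ _), ?_⟩
  apply Set.eq_of_subset_of_subset
  · rintro x ⟨hxS, rfl | hxC⟩
    · rfl
    · by_contra hxp
      have : x ∈ (S \ {p}) ∩ C := ⟨⟨hxS, fun h => hxp h⟩, hxC⟩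
      simp [hmt'] at this
  · rintro x rfl
    exact ⟨hp, Set.mem_insert _ _⟩

/-- Minimal selectors are linked. -/
lemma spec_linked {S : Set P} (hS : S ∈ Spec P) {p q : P} (hp : p ∈ S) (hq : q ∈ S) :
    wedge p q := by
  obtain ⟨C1, hC1, hC1e⟩ := spec_essential hS hp
  obtain ⟨C2, hC2, hC2e⟩ := spec_essential hS hq
  obtain ⟨k1, hk1⟩ := hC1
  obtain ⟨k2, hk2⟩ := hC2
  set k := max k1 k2 with hk
  set D : Set P := {a | (∃ b ∈ C1, a ≤ b) ∧ (∃ c ∈ C2, a ≤ c)} with hD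
  have hDcap : IsCap D := by
    refine ⟨k, fun a ha => ?_⟩
    obtain ⟨a1, ha1, haa1⟩ := level_le (le_max_left k1 k2) a ha
    obtain ⟨b1, hb1, hab1⟩ := hk1 a1 ha1
    obtain ⟨a2, ha2, haa2⟩ := level_le (le_max_right k1 k2) a ha
    obtain ⟨b2, hb2, hab2⟩ := hk2 a2 ha2
    exact ⟨a, ⟨⟨b1, hb1, haa1.trans hab1⟩, ⟨b2, hb2, haa2.trans hab2⟩⟩, le_refl a⟩
  obtain ⟨x, hxS, ⟨b, hb, hxb⟩, ⟨c, hc, hxc⟩⟩ := hS.1 D hDcap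
  have hbS : b ∈ S := spec_upclosed hS hxS hxb
  have hcS : c ∈ S := spec_upclosed hS hxS hxc
  have hbp : b = p := by
    have : b ∈ S ∩ C1 := ⟨hbS, hb⟩
    rwa [hC1e] at this
  have hcq : c = q := by
    have : c ∈ S ∩ C2 := ⟨hcS, hc⟩
    rwa [hC2e] at this
  exact ⟨x, hbp ▸ hxb, hcq ▸ hxc⟩

/-- The star lemma: if `S ⊆ p^∧` and `p ⊲ r` then `r ∈ S`. -/
lemma spec_star {S : Set P} (hS : S ∈ Spec P) {p r : P} (hsub : S ⊆ wedgeSet p)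
    (h : starBelow p r) : r ∈ S := by
  obtain ⟨n, hn⟩ := h
  obtain ⟨c, hcS, hcl⟩ := hS.1 (level P n) (level_isCap n)
  exact spec_upclosed hS hcS (hn c hcl (hsub hcS))

end Lemmas

section Koenig

variable {P : Type*} [PartialOrder P]

/-- `a` is bad for `D` if nothing in `D` lies above `a`. -/
def Bad (D : Set P) (a : P) : Prop := ¬ ∃ d ∈ D, a ≤ d

lemma bad_up {D : Set P} {a x : P} (h : Bad D a) (hax : a ≤ x) : Bad D x :=
  fun ⟨d, hd, hxd⟩ => h ⟨d, hd, hax.trans hxd⟩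

/-- Graded chains: `GC P n k b a` means there is a chain from `b` up to `a`
passing through one element of each level between `n+k` and `n`. -/
def GC (P : Type*) [PartialOrder P] : ℕ → ℕ → P → P → Prop
  | _, 0, b, a => b = a
  | n, k + 1, b, a => ∃ c, c ∈ level P (n + 1) ∧ c ≤ a ∧ GC P (n + 1) k b c

lemma gc_le : ∀ (k n : ℕ) (b a : P), GC P n k b a → b ≤ a := by
  intro k
  induction k with
  | zero => intro n b a h; exact le_of_eq h
  | succ k ih =>
    rintro n b a ⟨c, _, hca, hgc⟩
    exact (ih (n + 1) b c hgc).trans hca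

lemma gc_exists : ∀ (k n : ℕ) (b : P), b ∈ level P (n + k) → ∃ a ∈ level P n, GC P n k b a := by
  intro k
  induction k with
  | zero => intro n b hb; exact ⟨b, hb, rfl⟩
  | succ k ih =>
    intro n b hb
    have hb' : b ∈ level P ((n + 1) + k) := by
      have : n + (k + 1) = (n + 1) + k := by omega
      rwa [this] at hb
    obtain ⟨c, hc, hgc⟩ := ih (n + 1) b hb'
    obtain ⟨a, ha, hca⟩ := level_succ_le hc
    exact ⟨a, ha, ⟨c, hc, hca, hgc⟩⟩

lemma gc_trunc : ∀ (k j : ℕ), j ≤ k → ∀ (n : ℕ) (b c : P), GC P n k b c →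
    ∃ b', b ≤ b' ∧ GC P n j b' c ∧ (0 < j → b' ∈ level P (n + j)) := by
  intro k
  induction k with
  | zero =>
    intro j hj n b c h
    interval_cases j
    exact ⟨b, le_refl b, h, fun h0 => absurd h0 (lt_irrefl 0)⟩
  | succ k ih =>
    intro j hj n b c h
    obtain ⟨c', hc', hcc', hgc⟩ := h
    cases j with
    | zero =>
      exact ⟨c, (gc_le k (n + 1) b c' hgc).trans hcc', rfl, fun h0 => absurd h0 (lt_irrefl 0)⟩
    | succ j' =>
      obtain ⟨b', hbb', hgc', hmem⟩ := ih j' (Nat.succ_le_succ_iff.mp hj) (n + 1) b c' hgc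
      refine ⟨b', hbb', ⟨c', hc', hcc', hgc'⟩, fun _ => ?_⟩
      cases Nat.eq_zero_or_pos j' with
      | inl h0 =>
        subst h0
        have : b' = c' := hgc'
        subst this
        simpa using hc'
      | inr hpos =>
        have : n + 1 + j' = n + (j' + 1) := by omega
        rw [← this]
        exact hmem hpos

/-- `a` has bad graded chains reaching arbitrarily deep. -/
def Deep (D : Set P) (n : ℕ) (a : P) : Prop :=
  ∀ k, ∃ b, b ∈ level P (n + k) ∧ Bad D b ∧ GC P n k b a

lemma deep_start (hω : IsOmegaPoset P) {D : Set P}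
    (hD : ∀ n, ∃ a ∈ level P n, Bad D a) :
    ∃ a, a ∈ level P 0 ∧ Bad D a ∧ Deep D 0 a := by
  by_contra hc
  push_neg at hc
  classical
  set f : P → ℕ := fun a =>
    if h : ∃ k, ¬ ∃ b, b ∈ level P (0 + k) ∧ Bad D b ∧ GC P 0 k b a then h.choose else 0
    with hf
  set K := (hω.1 0).toFinset with hK
  set N := K.sup f with hN
  obtain ⟨x, hx, hxbad⟩ := hD N
  have hx' : x ∈ level P (0 + N) := by simpa using hx
  obtain ⟨a, ha, hgc⟩ := gc_exists N 0 x hx'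
  have habad : Bad D a := bad_up hxbad (gc_le _ _ _ _ hgc)
  have hnd : ¬ Deep D 0 a := fun hd => hc a ha habad hd
  have hex : ∃ k, ¬ ∃ b, b ∈ level P (0 + k) ∧ Bad D b ∧ GC P 0 k b a := by
    simp only [Deep, not_forall] at hnd
    exact hnd
  have hfa : ¬ ∃ b, b ∈ level P (0 + f a) ∧ Bad D b ∧ GC P 0 (f a) b a := by
    rw [hf]; simp only [dif_pos hex]; exact hex.choose_spec
  have hfaN : f a ≤ N := Finset.le_sup (by simp [hK, ha])
  obtain ⟨b', hxb', hgc', hmem⟩ := gc_trunc N (f a) hfaN 0 x a hgc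
  have hb'bad : Bad D b' := bad_up hxbad hxb'
  cases Nat.eq_zero_or_pos (f a) with
  | inl h0 =>
    rw [h0] at hfa
    exact hfa ⟨a, by simpa using ha, habad, rfl⟩
  | inr hpos =>
    exact hfa ⟨b', hmem hpos, hb'bad, hgc'⟩

lemma deep_step (hω : IsOmegaPoset P) {D : Set P} {n : ℕ} {a : P}
    (hbad : Bad D a) (hdeep : Deep D n a) :
    ∃ b, b ∈ level P (n + 1) ∧ b ≤ a ∧ Bad D b ∧ Deep D (n + 1) b := by
  by_contra hc
  push_neg at hc
  classical
  set f : P → ℕ := fun b =>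
    if h : ∃ k, ¬ ∃ x, x ∈ level P ((n + 1) + k) ∧ Bad D x ∧ GC P (n + 1) k x b
    then h.choose else 0 with hf
  set K := (hω.1 (n + 1)).toFinset with hK
  set N := K.sup f with hN
  obtain ⟨x, hx, hxbad, hgcx⟩ := hdeep (N + 1)
  obtain ⟨c, hc1, hca, hgc⟩ := hgcx
  have hcbad : Bad D c := bad_up hxbad (gc_le _ _ _ _ hgc)
  have hnd : ¬ Deep D (n + 1) c := fun hd => hc c hc1 hca hcbad hd
  have hex : ∃ k, ¬ ∃ x, x ∈ level P ((n + 1) + k) ∧ Bad D x ∧ GC P (n + 1) k x c := by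
    simp only [Deep, not_forall] at hnd
    exact hnd
  have hfc : ¬ ∃ x, x ∈ level P ((n + 1) + f c) ∧ Bad D x ∧ GC P (n + 1) (f c) x c := by
    rw [hf]; simp only [dif_pos hex]; exact hex.choose_spec
  have hfcN : f c ≤ N := Finset.le_sup (by simp [hK, hc1])
  obtain ⟨b', hxb', hgc', hmem⟩ := gc_trunc N (f c) hfcN (n + 1) x c hgc
  have hb'bad : Bad D b' := bad_up hxbad hxb'
  cases Nat.eq_zero_or_pos (f c) with
  | inl h0 =>
    rw [h0] at hfc
    exact hfc ⟨c, by simpa using hc1, hcbad, rfl⟩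
  | inr hpos =>
    exact hfc ⟨b', hmem hpos, hb'bad, hgc'⟩

/-- A bad branch through all levels. -/
lemma exists_bad_branch (hω : IsOmegaPoset P) {D : Set P}
    (hD : ∀ n, ∃ a ∈ level P n, Bad D a) :
    ∃ g : ℕ → P, ∀ n, g n ∈ level P n ∧ Bad D (g n) ∧ g (n + 1) ≤ g n := by
  classical
  have h0 := deep_start hω hD
  let T : ℕ → Type _ := fun n => {a : P // a ∈ level P n ∧ Bad D a ∧ Deep D n a}
  let step : ∀ n, T n → T (n + 1) := fun n t =>
    ⟨(deep_step hω t.2.2.1 t.2.2.2).choose,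
      (deep_step hω t.2.2.1 t.2.2.2).choose_spec.1,
      (deep_step hω t.2.2.1 t.2.2.2).choose_spec.2.2⟩
  let b : ∀ n, T n := fun n => Nat.rec ⟨h0.choose, h0.choose_spec⟩ step n
  refine ⟨fun n => (b n).1, fun n => ⟨(b n).2.1, (b n).2.2.1, ?_⟩⟩
  show (b (n + 1)).1 ≤ (b n).1
  exact (deep_step hω (b n).2.2.1 (b n).2.2.2).choose_spec.2.1

/-- Every cap contains a finite cap. -/
lemma cap_finite_sub (hω : IsOmegaPoset P) {C : Set P} (hC : IsCap C) :
    ∃ C₀ ⊆ C, C₀.Finite ∧ IsCap C₀ := by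
  classical
  obtain ⟨m, hm⟩ := hC
  set f : P → P := fun a => if h : ∃ c ∈ C, a ≤ c then h.choose else a with hf
  refine ⟨f '' level P m, ?_, (hω.1 m).image f, ⟨m, fun a ha => ?_⟩⟩
  · rintro x ⟨a, ha, rfl⟩
    have h : ∃ c ∈ C, a ≤ c := hm a ha
    simp only [hf, dif_pos h]
    exact h.choose_spec.1
  · have h : ∃ c ∈ C, a ≤ c := hm a ha
    refine ⟨f a, Set.mem_image_of_mem f ha, ?_⟩
    simp only [hf, dif_pos h]
    exact h.choose_spec.2

/-- Cap duality: a set meeting every minimal selector is a cap. -/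
lemma cap_of_spec_meets (hω : IsOmegaPoset P) {D : Set P}
    (h : ∀ S ∈ Spec P, (S ∩ D).Nonempty) : IsCap D := by
  by_contra hnc
  have hD : ∀ n, ∃ a ∈ level P n, Bad D a := by
    intro n
    have : ¬ refines (level P n) D := fun hr => hnc ⟨n, hr⟩
    simp only [refines, not_forall] at this
    obtain ⟨a, ha, hna⟩ := this
    exact ⟨a, ha, fun ⟨d, hd, had⟩ => hna ⟨d, hd, had⟩⟩
  obtain ⟨g, hg⟩ := exists_bad_branch hω hD
  set S0 : Set P := {p | ∃ n, g n ≤ p} with hS0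
  have hS0sel : IsSelector S0 := by
    rintro C ⟨m, hm⟩
    obtain ⟨c, hc, hgc⟩ := hm (g m) (hg m).1
    exact ⟨c, ⟨m, hgc⟩, hc⟩
  have hS0bad : ∀ p ∈ S0, Bad D p := by
    rintro p ⟨n, hn⟩
    exact bad_up (hg n).2.1 hn
  -- Zorn
  set Sel : Set (Set P) := {T | T ⊆ S0 ∧ IsSelector T} with hSel
  have hzorn : ∀ c ⊆ Sel, IsChain (· ⊆ ·) c → c.Nonempty →
      ∃ lb ∈ Sel, ∀ s ∈ c, lb ⊆ s := by
    intro c hcSel hchain hcne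
    refine ⟨⋂₀ c, ⟨?_, ?_⟩, fun s hs => Set.sInter_subset_of_mem hs⟩
    · obtain ⟨s, hs⟩ := hcne
      exact (Set.sInter_subset_of_mem hs).trans (hcSel hs).1
    · intro C hC
      obtain ⟨C₀, hC₀C, hC₀fin, hC₀cap⟩ := cap_finite_sub hω hC
      have himfin : ((fun s => s ∩ C₀) '' c).Finite := by
        apply Set.Finite.subset hC₀fin.finite_subsets
        rintro x ⟨s, _, rfl⟩
        exact Set.inter_subset_right
      obtain ⟨s₀, hs₀, hmin⟩ := Set.Finite.exists_minimalFor' (fun s => s ∩ C₀) c himfin hcne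
      obtain ⟨x, hxs₀, hxC₀⟩ := (hcSel hs₀).2 C₀ hC₀cap
      refine ⟨x, Set.mem_sInter.mpr fun s hs => ?_, hC₀C hxC₀⟩
      rcases hchain.total hs₀ hs with hsub | hsub
      · exact hsub hxs₀
      · have : s₀ ∩ C₀ = s ∩ C₀ :=
          Set.Subset.antisymm (hmin hs (Set.inter_subset_inter_left C₀ hsub))
            (Set.inter_subset_inter_left C₀ hsub)
        have : x ∈ s ∩ C₀ := this ▸ ⟨hxs₀, hxC₀⟩
        exact this.1
  obtain ⟨m, hmS0, hmmin⟩ := zorn_superset_nonempty Sel hzorn S0 ⟨le_refl S0, hS0sel⟩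
  have hmspec : m ∈ Spec P := by
    refine ⟨hmmin.1.2, fun T hTm hTsel => ?_⟩
    have hTSel : T ∈ Sel := ⟨hTm.trans hmS0, hTsel⟩
    exact Set.eq_of_subset_of_subset hTm (hmmin.2 hTSel hTm)
  obtain ⟨x, hxm, hxD⟩ := h m hmspec
  exact hS0bad x (hmS0 hxm) ⟨x, hxD, le_refl x⟩

end Koenig

section Interp

variable {P : Type*} [PartialOrder P]

/-- Interpolation: below any two points of a minimal selector there is a point of the
selector star-below both (using regularity). -/
lemma interp2 (hreg : IsRegular P) {S : Set P} (hS : S ∈ Spec P) {p1 p2 : P}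
    (hp1 : p1 ∈ S) (hp2 : p2 ∈ S) :
    ∃ p ∈ S, starBelow p p1 ∧ starBelow p p2 := by
  obtain ⟨C1, hC1cap, hC1e⟩ := spec_essential hS hp1
  obtain ⟨C2, hC2cap, hC2e⟩ := spec_essential hS hp2
  obtain ⟨k1, hk1⟩ := hC1cap
  obtain ⟨k2, hk2⟩ := hC2cap
  obtain ⟨n, _, hreg'⟩ := hreg (max k1 k2)
  obtain ⟨p, hpS, hpl⟩ := spec_meets hS (level_isCap n)
  obtain ⟨b, hbk, hpb⟩ := hreg' p hpl
  obtain ⟨j, hj⟩ := hpb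
  obtain ⟨c0, hc0S, hc0l⟩ := spec_meets hS (level_isCap j)
  have hc0b : c0 ≤ b := hj c0 hc0l (spec_linked hS hpS hc0S)
  have hbS : b ∈ S := spec_upclosed hS hc0S hc0b
  have key : ∀ (k' : ℕ) (C : Set P) (x : P), k' ≤ max k1 k2 → refines (level P k') C →
      S ∩ C = {x} → b ≤ x := by
    intro k' C x hk' href hCe
    obtain ⟨c, hcl, hbc⟩ := level_le hk' b hbk
    obtain ⟨c', hc'C, hcc'⟩ := href c hcl
    have hc'S : c' ∈ S := spec_upclosed hS hbS (hbc.trans hcc')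
    have : c' ∈ S ∩ C := ⟨hc'S, hc'C⟩
    rw [hCe] at this
    exact this ▸ (hbc.trans hcc')
  have hb1 : b ≤ p1 := key k1 C1 p1 (le_max_left _ _) hk1 hC1e
  have hb2 : b ≤ p2 := key k2 C2 p2 (le_max_right _ _) hk2 hC2e
  refine ⟨p, hpS, ⟨j, fun c hc hw => (hj c hc hw).trans hb1⟩,
    ⟨j, fun c hc hw => (hj c hc hw).trans hb2⟩⟩

lemma mem_pSBar_self {S : SpecT P} {p : P} (hp : p ∈ S.1) : S ∈ pSBar p :=
  fun t ht => spec_linked S.2 hp ht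

lemma pSBar_subset_open {p p' : P} (h : starBelow p p') : pSBar p ⊆ pSOpen (P := P) p' :=
  fun T hT => spec_star T.2 hT h

lemma pSBar_mono {p p' : P} (h : starBelow p p') : pSBar p ⊆ pSBar (P := P) p' :=
  fun T hT => mem_pSBar_self (spec_star T.2 hT h)

lemma isOpen_pSOpen (p : P) : IsOpen (pSOpen p) :=
  TopologicalSpace.GenerateOpen.basic _ ⟨p, rfl⟩

/-- Shrinking: every open neighbourhood contains a closed basic neighbourhood. -/
lemma open_shrink (hreg : IsRegular P) {U : Set (SpecT P)} (hU : IsOpen U)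
    {S : SpecT P} (hSU : S ∈ U) : ∃ p ∈ S.1, pSBar p ⊆ U := by
  have hU' : TopologicalSpace.GenerateOpen
      {V | ∃ p : P, V = {S : SpecT P | p ∈ S.1}} U := hU
  clear hU
  induction hU' with
  | basic V hV =>
    obtain ⟨q, rfl⟩ := hV
    obtain ⟨p, hpS, hstar, -⟩ := interp2 hreg S.2 hSU hSU
    exact ⟨p, hpS, fun T hT => pSBar_subset_open hstar hT⟩
  | univ =>
    obtain ⟨p, hpS, -⟩ := spec_meets S.2 (univ_isCap)
    exact ⟨p, hpS, Set.subset_univ _⟩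
  | inter U V hUg hVg ihU ihV =>
    obtain ⟨p1, hp1, hsub1⟩ := ihU hSU.1
    obtain ⟨p2, hp2, hsub2⟩ := ihV hSU.2
    obtain ⟨p, hpS, hs1, hs2⟩ := interp2 hreg S.2 hp1 hp2
    exact ⟨p, hpS, fun T hT => ⟨hsub1 (pSBar_mono hs1 hT), hsub2 (pSBar_mono hs2 hT)⟩⟩
  | sUnion 𝒰 hg ih =>
    obtain ⟨V, hV𝒰, hSV⟩ := hSU
    obtain ⟨p, hpS, hsub⟩ := ih V hV𝒰 hSV
    exact ⟨p, hpS, hsub.trans (Set.subset_sUnion_of_mem hV𝒰)⟩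

end Interp


section RefinerLemmas

variable {P Q : Type*} [PartialOrder P] [PartialOrder Q]

lemma relPhi_to_bar {φ : SpecT P → SpecT Q} {q : Q} {p : P} (h : relPhi φ q p) :
    relBarPhi φ q p := fun S hS => mem_pSBar_self (h S hS)

end RefinerLemmas

end OP

open OP in
/-- For continuous `φ : SP → SQ` with `P` regular, the relations `⊒_φ` and `⊐_φ` are
refiners, and if `Q` is also regular then `φ(S) = S^{⊑_φ ⊲}` (likewise for `⊐_φ`). -/
theorem stmt8 {P Q : Type*} [PartialOrder P] [PartialOrder Q]
    (hP : IsOmegaPoset P) (hQ : IsOmegaPoset Q) (hregP : IsRegular P)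
    (φ : SpecT P → SpecT Q) (hφ : Continuous φ) :
    IsRefinerRel (relBarPhi φ) ∧ IsRefinerRel (relPhi φ) ∧
      (IsRegular Q →
        (∀ S : SpecT P, (φ S).1 = {r : Q | ∃ p ∈ S.1, ∃ q, relBarPhi φ q p ∧ starBelow q r}) ∧
        (∀ S : SpecT P, (φ S).1 = {r : Q | ∃ p ∈ S.1, ∃ q, relPhi φ q p ∧ starBelow q r})) := by
  have refOne : ∀ C : Set Q, IsCap C → ∃ B : Set P, IsCap B ∧
      ∀ b ∈ B, ∃ c ∈ C, relPhi φ c b := by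
    intro C hC
    set B : Set P := {p : P | ∃ c ∈ C, relPhi φ c p} with hB
    have hmeets : ∀ S ∈ Spec P, (S ∩ B).Nonempty := by
      intro S hS
      set S' : SpecT P := ⟨S, hS⟩ with hS'
      obtain ⟨c, hcφ, hcC⟩ := spec_meets (φ S').2 hC
      have hop : IsOpen (φ ⁻¹' pSOpen c) := (isOpen_pSOpen c).preimage hφ
      have hmem : S' ∈ φ ⁻¹' pSOpen c := hcφ
      obtain ⟨p, hpS, hsub⟩ := open_shrink hregP hop hmem
      exact ⟨p, hpS, ⟨c, hcC, fun T hT => hsub hT⟩⟩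
    exact ⟨B, cap_of_spec_meets hP hmeets, fun b hb => hb⟩
  refine ⟨?_, ?_, ?_⟩
  · intro C hC
    obtain ⟨B, hBcap, hBr⟩ := refOne C hC
    refine ⟨B, hBcap, fun b hb => ?_⟩
    obtain ⟨c, hcC, hr⟩ := hBr b hb
    exact ⟨c, hcC, relPhi_to_bar hr⟩
  · exact refOne
  · intro hregQ
    have forward : ∀ (S : SpecT P) (r : Q), r ∈ (φ S).1 →
        ∃ p ∈ S.1, ∃ q, relPhi φ q p ∧ starBelow q r := by
      intro S r hr
      obtain ⟨q, hqφ, hq1, -⟩ := interp2 hregQ (φ S).2 hr hr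
      have hop : IsOpen (φ ⁻¹' pSOpen q) := (isOpen_pSOpen q).preimage hφ
      obtain ⟨p, hpS, hsub⟩ := open_shrink hregP hop (show S ∈ _ from hqφ)
      exact ⟨p, hpS, q, fun T hT => hsub hT, hq1⟩
    have backward : ∀ (S : SpecT P) (r : Q) (p : P) (q : Q), p ∈ S.1 →
        relBarPhi φ q p → starBelow q r → r ∈ (φ S).1 := by
      intro S r p q hpS hrel hqr
      have hSp : S ∈ pSBar p := mem_pSBar_self hpS
      exact spec_star (φ S).2 (hrel S hSp) hqr
    constructor
    · intro S
      apply Set.ext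
      intro r
      constructor
      · intro hr
        obtain ⟨p, hpS, q, hrel, hst⟩ := forward S r hr
        exact ⟨p, hpS, q, relPhi_to_bar hrel, hst⟩
      · rintro ⟨p, hpS, q, hrel, hst⟩
        exact backward S r p q hpS hrel hst
    · intro S
      apply Set.ext
      intro r
      constructor
      · exact forward S r
      · rintro ⟨p, hpS, q, hrel, hst⟩
        exact backward S r p q hpS (relPhi_to_bar hrel) hst
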